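/- Let {τ_n}_{n≥1} be piecewise expanding maps of [0,1] (each piecewise strictly monotone and C² on the intervals of a finite partition, with |τ_n'| ≥ s > 1 on each piece), converging uniformly to a map τ, and assume all τ_n satisfy the Lasota–Yorke inequality V(P_{τ_n} f) ≤ A·V(f) + B·∫|f| dm with common constants 0 ≤ A < 1 and B. Let f be a density of bounded variation on [0,1] and f_n = (1/n) Σ_{i=1}^n P_{τ_{(1,i)}} f, where τ_{(1,i)} = τ_i ∘ ⋯ ∘ τ_1. Then every L¹-limit f* of a convergent subsequence of {f_n} satisfies P_τ f* = f*; that is, the measure f*·m is an absolutely continuous τ-invariant measure. -/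

import Mathlib

open MeasureTheory Filter Topology
open scoped ENNReal

/-- Lebesgue measure on `[0,1]`. -/
noncomputable def m : Measure ℝ := volume.restrict (Set.Icc 0 1)

instance m_finite : IsFiniteMeasure m := by
  constructor
  rw [show m = volume.restrict (Set.Icc 0 1) from rfl,
    Measure.restrict_apply MeasurableSet.univ, Set.univ_inter, Real.volume_Icc]
  exact ENNReal.ofReal_lt_top

lemma m_ae_mem : ∀ᵐ x ∂m, x ∈ Set.Icc (0:ℝ) 1 :=
  ae_restrict_mem measurableSet_Icc


lemma bv_aemeasurable {g : ℝ → ℝ} (h : BoundedVariationOn g (Set.Icc 0 1)) :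
    AEMeasurable g m := by
  obtain ⟨p, q, hp, hq, hpq⟩ :=
    h.locallyBoundedVariationOn.exists_monotoneOn_sub_monotoneOn
  have hp' : AEMeasurable p (volume.restrict (Set.Icc 0 1)) :=
    aemeasurable_restrict_of_monotoneOn measurableSet_Icc hp
  have hq' : AEMeasurable q (volume.restrict (Set.Icc 0 1)) :=
    aemeasurable_restrict_of_monotoneOn measurableSet_Icc hq
  rw [hpq]
  exact hp'.sub hq'

lemma bv_integrable {g : ℝ → ℝ} (h : BoundedVariationOn g (Set.Icc 0 1)) :
    Integrable g m := by
  refine Integrable.mono' (integrable_const (|g 0| + (eVariationOn g (Set.Icc 0 1)).toReal))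
    (bv_aemeasurable h).aestronglyMeasurable ?_
  filter_upwards [m_ae_mem] with x hx
  have h0 : (0:ℝ) ∈ Set.Icc (0:ℝ) 1 := by constructor <;> norm_num
  have h1 : dist (g x) (g 0) ≤ (eVariationOn g (Set.Icc 0 1)).toReal := by
    rw [dist_edist]
    exact ENNReal.toReal_mono h (eVariationOn.edist_le g hx h0)
  have h2 : |g x| - |g 0| ≤ |g x - g 0| := abs_sub_abs_le_abs_sub _ _
  rw [Real.dist_eq] at h1
  have : ‖g x‖ = |g x| := rfl
  rw [this]
  linarith

lemma withDensity_apply_eq {u : ℝ → ℝ} (hu : Integrable u m) (hu0 : 0 ≤ᵐ[m] u)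
    {S : Set ℝ} (hS : MeasurableSet S) :
    (m.withDensity fun x => ENNReal.ofReal (u x)) S = ENNReal.ofReal (∫ x in S, u x ∂m) := by
  rw [withDensity_apply _ hS,
    ofReal_integral_eq_lintegral_ofReal hu.restrict (ae_restrict_of_ae hu0)]

lemma integral_withDensity' {u : ℝ → ℝ} (hu : AEMeasurable u m) (hu0 : 0 ≤ᵐ[m] u) (h : ℝ → ℝ) :
    ∫ x, h x ∂(m.withDensity fun x => ENNReal.ofReal (u x)) = ∫ x, h x * u x ∂m := by
  have heq : (fun x => ENNReal.ofReal (u x)) = fun x => ((u x).toNNReal : ℝ≥0∞) := rfl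
  rw [heq, integral_withDensity_eq_integral_smul₀ hu.real_toNNReal h]
  apply integral_congr_ae
  filter_upwards [hu0] with x hx
  simp [NNReal.smul_def, Real.coe_toNNReal _ hx, mul_comm]

lemma fp_pair {T : ℝ → ℝ} (hT : AEMeasurable T m) {u v : ℝ → ℝ}
    (hu : Integrable u m) (hu0 : 0 ≤ᵐ[m] u) (hv : Integrable v m) (hv0 : 0 ≤ᵐ[m] v)
    (hfp : ∀ A : Set ℝ, MeasurableSet A → ∫ x in A, v x ∂m = ∫ x in T ⁻¹' A, u x ∂m)
    {h : ℝ → ℝ} (hh : Continuous h) :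
    ∫ x, h x * v x ∂m = ∫ x, h (T x) * u x ∂m := by
  set T' := hT.mk T with hT'def
  have hT' : Measurable T' := hT.measurable_mk
  have hTT' : T =ᵐ[m] T' := hT.ae_eq_mk
  set μu := m.withDensity fun x => ENNReal.ofReal (u x) with hμu
  set μv := m.withDensity fun x => ENNReal.ofReal (v x) with hμv
  haveI hfinv : IsFiniteMeasure μv :=
    ⟨by rw [hμv, withDensity_apply_eq hv hv0 MeasurableSet.univ]; exact ENNReal.ofReal_lt_top⟩
  haveI hfinu : IsFiniteMeasure μu :=
    ⟨by rw [hμu, withDensity_apply_eq hu hu0 MeasurableSet.univ]; exact ENNReal.ofReal_lt_top⟩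
  haveI hfinmap : IsFiniteMeasure (Measure.map T' μu) := by
    constructor
    rw [Measure.map_apply hT' MeasurableSet.univ, Set.preimage_univ]
    exact measure_lt_top μu _
  have hmap : Measure.map T' μu = μv := by
    refine Measure.ext_of_Iic _ _ fun t => ?_
    rw [Measure.map_apply hT' measurableSet_Iic,
      hμu, hμv, withDensity_apply_eq hu hu0 (hT' measurableSet_Iic),
      withDensity_apply_eq hv hv0 measurableSet_Iic, hfp _ measurableSet_Iic]
    congr 1
    apply setIntegral_congr_set
    filter_upwards [hTT'] with x hx
    show (T' x ∈ Set.Iic t) = (T x ∈ Set.Iic t)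
    rw [hx]
  calc ∫ x, h x * v x ∂m = ∫ x, h x ∂μv := (integral_withDensity' hv.aemeasurable hv0 h).symm
    _ = ∫ x, h x ∂(Measure.map T' μu) := by rw [hmap]
    _ = ∫ x, h (T' x) ∂μu := integral_map hT'.aemeasurable hh.aestronglyMeasurable
    _ = ∫ x, h (T' x) * u x ∂m := integral_withDensity' hu.aemeasurable hu0 (fun x => h (T' x))
    _ = ∫ x, h (T x) * u x ∂m := by
        apply integral_congr_ae
        filter_upwards [hTT'] with x hx
        rw [hx]

/-- `T : [0,1] → [0,1]` is piecewise expanding: there is a partition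
`0 = a_0 < ⋯ < a_r = 1` such that on each open interval `(a_{i-1}, a_i)` the map `T`
is strictly monotone and `C²` with `|T'| ≥ s` there. -/
def PiecewiseExpanding (T : ℝ → ℝ) (s : ℝ) : Prop :=
  ∃ (r : ℕ) (a : ℕ → ℝ), 0 < r ∧ a 0 = 0 ∧ a r = 1 ∧
    (∀ i < r, a i < a (i + 1)) ∧
    ∀ i < r,
      (StrictMonoOn T (Set.Ioo (a i) (a (i + 1))) ∨
        StrictAntiOn T (Set.Ioo (a i) (a (i + 1)))) ∧
      ContDiffOn ℝ 2 T (Set.Ioo (a i) (a (i + 1))) ∧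
      ∀ x ∈ Set.Ioo (a i) (a (i + 1)),
        s ≤ |derivWithin T (Set.Ioo (a i) (a (i + 1))) x|

lemma pe_aemeasurable {T : ℝ → ℝ} {s : ℝ} (h : PiecewiseExpanding T s) :
    AEMeasurable T m := by
  obtain ⟨r, a, hr, ha0, har, hlt, hmain⟩ := h
  have hmono : ∀ i j, i ≤ j → j ≤ r → a i ≤ a j := by
    intro i j hij hjr
    induction j with
    | zero =>
      have : i = 0 := Nat.le_zero.mp hij
      simp [this]
    | succ k ih =>
      rcases Nat.lt_or_ge i (k+1) with hik | hik
      · have h1 : a i ≤ a k := ih (Nat.lt_succ_iff.mp hik) (Nat.le_of_succ_le hjr)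
        exact h1.trans (hlt k (Nat.lt_of_succ_le hjr)).le
      · have : i = k+1 := le_antisymm hij hik
        simp [this]
  set S : ℕ → Set ℝ := fun i => if i < r then Set.Ioo (a i) (a (i+1)) else ∅ with hS
  have hsub : ∀ i, S i ⊆ Set.Icc (0:ℝ) 1 := by
    intro i x hx
    by_cases hi : i < r
    · rw [show S i = Set.Ioo (a i) (a (i+1)) from if_pos hi] at hx
      constructor
      · calc (0:ℝ) = a 0 := ha0.symm
          _ ≤ a i := hmono 0 i (Nat.zero_le i) hi.le
          _ ≤ x := hx.1.le
      · calc x ≤ a (i+1) := hx.2.le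
          _ ≤ a r := hmono (i+1) r (Nat.succ_le_of_lt hi) le_rfl
          _ = 1 := har
    · rw [show S i = ∅ from if_neg hi] at hx
      exact absurd hx (Set.notMem_empty x)
  have hfind : ∀ j, j ≤ r → ∀ x : ℝ, 0 ≤ x → x ≤ a j → (∀ i, x ∉ S i) → ∃ i, x = a i := by
    intro j
    induction j with
    | zero =>
      intro _ x hx0 hxj _
      exact ⟨0, le_antisymm hxj (by rw [ha0]; exact hx0)⟩
    | succ k ih =>
      intro hjr x hx0 hxj hnot
      rcases le_or_gt x (a k) with hxk | hxk
      · exact ih (Nat.le_of_succ_le hjr) x hx0 hxk hnot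
      · have hk : k < r := Nat.lt_of_succ_le hjr
        have h5 := hnot k
        rw [show S k = Set.Ioo (a k) (a (k+1)) from if_pos hk] at h5
        have : ¬ (a k < x ∧ x < a (k+1)) := h5
        push_neg at this
        exact ⟨k+1, le_antisymm hxj (this hxk)⟩
  have hcover : Set.Icc (0:ℝ) 1 =ᵐ[volume] ⋃ i, S i := by
    rw [MeasureTheory.ae_eq_set]
    constructor
    · apply measure_mono_null ?_ ((Set.countable_range a).measure_zero volume)
      · intro x hx
        obtain ⟨hx1, hx2⟩ := hx
        have hx3 : ∀ i, x ∉ S i := by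
          intro i hi
          exact hx2 (Set.mem_iUnion.2 ⟨i, hi⟩)
        obtain ⟨i, hi⟩ := hfind r le_rfl x hx1.1 (by rw [har]; exact hx1.2) hx3
        exact ⟨i, hi.symm⟩
    · have : (⋃ i, S i) \ Set.Icc (0:ℝ) 1 = ∅ := by
        rw [Set.diff_eq_empty]
        exact Set.iUnion_subset hsub
      rw [this]
      exact measure_empty
  have hm' : m = volume.restrict (⋃ i, S i) := Measure.restrict_congr_set hcover
  rw [hm']
  rw [aemeasurable_iUnion_iff]
  intro i
  by_cases hi : i < r
  · obtain ⟨hmon, _, _⟩ := hmain i hi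
    rcases hmon with hmon | hanti
    · have := aemeasurable_restrict_of_monotoneOn (μ := volume) measurableSet_Ioo hmon.monotoneOn
      simpa [hS, if_pos hi] using this
    · have := aemeasurable_restrict_of_antitoneOn (μ := volume) measurableSet_Ioo hanti.antitoneOn
      simpa [hS, if_pos hi] using this
  · have : S i = ∅ := by rw [hS]; simp [hi]
    rw [this, Measure.restrict_empty]
    exact aemeasurable_zero_measure


/-- `g` is a version of the Frobenius–Perron image of `f` under `T`:
`∫_A g dm = ∫_{T⁻¹(A)} f dm` for every Borel set `A`. -/
def IsFPImage (T : ℝ → ℝ) (f g : ℝ → ℝ) : Prop :=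
  ∀ A : Set ℝ, MeasurableSet A → ∫ x in A, g x ∂m = ∫ x in T ⁻¹' A, f x ∂m

/-- `opComp P n f = (P_n ∘ P_{n-1} ∘ ⋯ ∘ P_1) f` (with `opComp P 0 f = f`),
so `opComp P n f` represents `P_{τ_{(1,n)}} f = P_{τ_n} ⋯ P_{τ_1} f`. -/
def opComp (P : ℕ → (ℝ → ℝ) → (ℝ → ℝ)) : ℕ → (ℝ → ℝ) → (ℝ → ℝ)
  | 0 => fun f => f
  | n + 1 => fun f => P (n + 1) (opComp P n f)


open scoped NNReal

lemma sum_Icc_one (u : ℕ → ℝ) (n : ℕ) :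
    ∑ i ∈ Finset.Icc 1 n, u i = ∑ i ∈ Finset.range n, u (i+1) := by
  induction n with
  | zero => simp
  | succ n ih =>
    rw [Finset.sum_Icc_succ_top (Nat.succ_le_succ (Nat.zero_le n)), ih,
      Finset.sum_range_succ]

/-- For piecewise expanding maps `τ_n ⇉ τ` whose Frobenius–Perron operators satisfy a
common Lasota–Yorke inequality, every `L¹`-limit `f*` of a convergent subsequence of
the Cesàro averages `f_n = (1/n) Σ_{i=1}^n P_{τ_{(1,i)}} f` of a BV density `f`
satisfies `P_τ f* = f*`: the measure `f*·m` is an absolutely continuous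
`τ`-invariant measure. -/
theorem limit_of_cesaro_averages_is_invariant_density
    (s : ℝ) (hs : 1 < s)
    (τseq : ℕ → ℝ → ℝ) (τ : ℝ → ℝ)
    (hpe : ∀ n, 1 ≤ n → PiecewiseExpanding (τseq n) s)
    (hconv : TendstoUniformlyOn τseq τ atTop (Set.Icc 0 1))
    (P : ℕ → (ℝ → ℝ) → (ℝ → ℝ))
    (hP : ∀ n, 1 ≤ n → ∀ g : ℝ → ℝ, Integrable g m → IsFPImage (τseq n) g (P n g))
    (A B : ℝ) (hA0 : 0 ≤ A) (hA1 : A < 1)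
    (hLY : ∀ n, 1 ≤ n → ∀ g : ℝ → ℝ, BoundedVariationOn g (Set.Icc 0 1) →
      eVariationOn (P n g) (Set.Icc 0 1) ≤
        ENNReal.ofReal A * eVariationOn g (Set.Icc 0 1)
          + ENNReal.ofReal (B * ∫ x, |g x| ∂m))
    (f : ℝ → ℝ) (hfbv : BoundedVariationOn f (Set.Icc 0 1))
    (hf0 : ∀ x, 0 ≤ f x) (hfint : Integrable f m) (hf1 : ∫ x, f x ∂m = 1)
    (fseq : ℕ → ℝ → ℝ)
    (hfseq : ∀ n x, fseq n x = (1 / (n : ℝ)) * ∑ i ∈ Finset.Icc 1 n, opComp P i f x)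
    (fstar : ℝ → ℝ) (hfstar : Integrable fstar m)
    (φ : ℕ → ℕ) (hφ : StrictMono φ) (hφ1 : ∀ k, 1 ≤ φ k)
    (hlim : Tendsto (fun k => ∫ x, |fseq (φ k) x - fstar x| ∂m) atTop (𝓝 0)) :
    ∀ E : Set ℝ, MeasurableSet E →
      (m.withDensity fun x => ENNReal.ofReal (fstar x)) (τ ⁻¹' E)
        = (m.withDensity fun x => ENNReal.ofReal (fstar x)) E := by
  intro E hE
  classical
  set g : ℕ → ℝ → ℝ := fun i => opComp P i f with hgdef
  -- basic properties of the iterates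
  have hGood : ∀ i, Integrable (g i) m ∧ (0 ≤ᵐ[m] g i) ∧
      BoundedVariationOn (g i) (Set.Icc 0 1) ∧ ∫ x, g i x ∂m = 1 := by
    intro i
    induction i with
    | zero => exact ⟨hfint, Filter.Eventually.of_forall hf0, hfbv, hf1⟩
    | succ i ih =>
      obtain ⟨hint, hnn, hbv, hone⟩ := ih
      have h1le : 1 ≤ i + 1 := Nat.succ_le_succ (Nat.zero_le i)
      have hFP : IsFPImage (τseq (i+1)) (g i) (g (i+1)) := hP (i+1) h1le (g i) hint
      have hbv' : BoundedVariationOn (g (i+1)) (Set.Icc 0 1) := by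
        have hle := hLY (i+1) h1le (g i) hbv
        have h2 : ENNReal.ofReal A * eVariationOn (g i) (Set.Icc 0 1)
            + ENNReal.ofReal (B * ∫ x, |g i x| ∂m) < ⊤ :=
          ENNReal.add_lt_top.2 ⟨ENNReal.mul_lt_top ENNReal.ofReal_lt_top
            (lt_top_iff_ne_top.2 hbv), ENNReal.ofReal_lt_top⟩
        exact (lt_of_le_of_lt hle h2).ne
      have hint' : Integrable (g (i+1)) m := bv_integrable hbv'
      have hnn' : 0 ≤ᵐ[m] g (i+1) := by
        refine ae_nonneg_of_forall_setIntegral_nonneg hint' fun S hS _ => ?_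
        rw [hFP S hS]
        exact integral_nonneg_of_ae (ae_restrict_of_ae hnn)
      have hone' : ∫ x, g (i+1) x ∂m = 1 := by
        have h3 := hFP Set.univ MeasurableSet.univ
        rw [Set.preimage_univ, setIntegral_univ, setIntegral_univ] at h3
        rw [h3]; exact hone
      exact ⟨hint', hnn', hbv', hone'⟩
  have hgint : ∀ i, Integrable (g i) m := fun i => (hGood i).1
  have hgnn : ∀ i, 0 ≤ᵐ[m] g i := fun i => (hGood i).2.1
  have hgone : ∀ i, ∫ x, g i x ∂m = 1 := fun i => (hGood i).2.2.2
  have hfseqg : ∀ n x, fseq n x = (1/(n:ℝ)) * ∑ i ∈ Finset.Icc 1 n, g i x := hfseq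
  -- measurability of the maps
  have hτseq_meas : ∀ n, 1 ≤ n → AEMeasurable (τseq n) m :=
    fun n hn => pe_aemeasurable (hpe n hn)
  have hτmeas : AEMeasurable τ m := by
    apply aemeasurable_of_tendsto_metrizable_ae' (f := fun n => τseq (n+1))
      (fun n => hτseq_meas (n+1) (Nat.succ_le_succ (Nat.zero_le n)))
    filter_upwards [m_ae_mem] with x hx
    exact (hconv.tendsto_at hx).comp (tendsto_add_atTop_nat 1)
  set τ' : ℝ → ℝ := hτmeas.mk τ with hτ'def
  have hτ'meas : Measurable τ' := hτmeas.measurable_mk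
  have hττ' : τ =ᵐ[m] τ' := hτmeas.ae_eq_mk
  -- Cesàro averages
  have hfseqint : ∀ n, Integrable (fseq n) m := by
    intro n
    have : fseq n = fun x => (1/(n:ℝ)) * ∑ i ∈ Finset.Icc 1 n, g i x :=
      funext fun x => hfseqg n x
    rw [this]
    exact (integrable_finset_sum _ fun i _ => hgint i).const_mul _
  have hfseq0 : ∀ n, 0 ≤ᵐ[m] fseq n := by
    intro n
    have hall : ∀ᵐ x ∂m, ∀ i, 0 ≤ g i x := ae_all_iff.2 fun i => hgnn i
    filter_upwards [hall] with x hx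
    rw [hfseqg n x]
    exact mul_nonneg (by positivity) (Finset.sum_nonneg fun i _ => hx i)
  -- f* is a.e. nonnegative
  have hstar0 : 0 ≤ᵐ[m] fstar := by
    refine ae_nonneg_of_forall_setIntegral_nonneg hfstar fun S hS _ => ?_
    have hconvS : Tendsto (fun k => ∫ x in S, fseq (φ k) x ∂m) atTop
        (𝓝 (∫ x in S, fstar x ∂m)) := by
      rw [← tendsto_sub_nhds_zero_iff]
      apply squeeze_zero_norm ?_ hlim
      intro k
      have hint1 : Integrable (fseq (φ k)) (m.restrict S) := (hfseqint _).restrict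
      have hint2 : Integrable fstar (m.restrict S) := hfstar.restrict
      calc ‖∫ x in S, fseq (φ k) x ∂m - ∫ x in S, fstar x ∂m‖
          = ‖∫ x in S, (fseq (φ k) x - fstar x) ∂m‖ := by rw [integral_sub hint1 hint2]
        _ ≤ ∫ x in S, ‖fseq (φ k) x - fstar x‖ ∂m := norm_integral_le_integral_norm _
        _ ≤ ∫ x, |fseq (φ k) x - fstar x| ∂m :=
            setIntegral_le_integral ((hfseqint _).sub hfstar).abs
              (Filter.Eventually.of_forall fun x => abs_nonneg _)
    refine ge_of_tendsto hconvS (Filter.Eventually.of_forall fun k =>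
      integral_nonneg_of_ae (ae_restrict_of_ae (hfseq0 _)))
  -- key: invariance against Lipschitz test functions
  have key : ∀ (L : ℝ≥0) (h : ℝ → ℝ), LipschitzWith L h → (∀ x, |h x| ≤ 1) →
      ∫ x, h (τ x) * fstar x ∂m = ∫ x, h x * fstar x ∂m := by
    intro L h hLip hbd
    have hh : Continuous h := hLip.continuous
    have hbd' : ∃ C, ∀ x, ‖h x‖ ≤ C := ⟨1, fun x => by simpa [Real.norm_eq_abs] using hbd x⟩
    have hτaesm : AEStronglyMeasurable (fun x => h (τ x)) m :=
      (hh.measurable.comp_aemeasurable hτmeas).aestronglyMeasurable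
    have hbdτ : ∃ C, ∀ x, ‖h (τ x)‖ ≤ C := ⟨1, fun x => by simpa [Real.norm_eq_abs] using hbd (τ x)⟩
    have hτiaesm : ∀ i, AEStronglyMeasurable (fun x => h (τseq (i+1) x)) m := fun i =>
      (hh.measurable.comp_aemeasurable (hτseq_meas (i+1) (Nat.succ_le_succ (Nat.zero_le i)))).aestronglyMeasurable
    have inte : ∀ i, Integrable (fun x => h x * g i x) m :=
      fun i => (hgint i).bdd_mul hh.aestronglyMeasurable (Filter.Eventually.of_forall hbd'.choose_spec)
    have intb : ∀ i, Integrable (fun x => h (τ x) * g i x) m :=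
      fun i => (hgint i).bdd_mul hτaesm (Filter.Eventually.of_forall hbdτ.choose_spec)
    have inti : ∀ i, Integrable (fun x => h (τseq (i+1) x) * g i x) m :=
      fun i => (hgint i).bdd_mul (hτiaesm i) (c := 1) (Filter.Eventually.of_forall fun x => by simpa [Real.norm_eq_abs] using hbd _)
    have intc : ∀ i, Integrable (fun x => (h (τseq (i+1) x) - h (τ x)) * g i x) m := by
      intro i
      have heq : (fun x => (h (τseq (i+1) x) - h (τ x)) * g i x)
          = fun x => h (τseq (i+1) x) * g i x - h (τ x) * g i x := funext fun x => by ring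
      rw [heq]; exact (inti i).sub (intb i)
    set e : ℕ → ℝ := fun i => ∫ x, h x * g i x ∂m with hedef
    set b : ℕ → ℝ := fun i => ∫ x, h (τ x) * g i x ∂m with hbdef
    set c : ℕ → ℝ := fun i => ∫ x, (h (τseq (i+1) x) - h (τ x)) * g i x ∂m with hcdef
    have hpair : ∀ i : ℕ, e (i+1) = ∫ x, h (τseq (i+1) x) * g i x ∂m := by
      intro i
      exact fp_pair (hτseq_meas (i+1) (Nat.succ_le_succ (Nat.zero_le i)))
        (hgint i) (hgnn i) (hgint (i+1)) (hgnn (i+1))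
        (hP (i+1) (Nat.succ_le_succ (Nat.zero_le i)) (g i) (hgint i)) hh
    have heb : ∀ i, e (i+1) = b i + c i := by
      intro i
      rw [hpair i]
      have heq : (fun x => h (τseq (i+1) x) * g i x)
          = fun x => h (τ x) * g i x + (h (τseq (i+1) x) - h (τ x)) * g i x :=
        funext fun x => by ring
      rw [heq]
      exact integral_add (intb i) (intc i)
    have hb1 : ∀ i, |b i| ≤ 1 := by
      intro i
      have h1 : ‖b i‖ ≤ ∫ x, ‖h (τ x) * g i x‖ ∂m := norm_integral_le_integral_norm _
      have h2 : ∫ x, ‖h (τ x) * g i x‖ ∂m ≤ ∫ x, g i x ∂m := by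
        apply integral_mono_ae (intb i).norm (hgint i)
        filter_upwards [hgnn i] with x hx
        calc ‖h (τ x) * g i x‖ = |h (τ x)| * |g i x| := by
              rw [norm_mul]; rfl
          _ ≤ 1 * g i x := by
              apply mul_le_mul (hbd _) (le_of_eq (abs_of_nonneg hx)) (abs_nonneg _) zero_le_one
          _ = g i x := one_mul _
      rw [hgone i] at h2
      exact le_trans h1 h2
    -- c tends to zero
    have hc0 : Tendsto c atTop (𝓝 0) := by
      rw [Metric.tendsto_atTop]
      intro ε hε
      have hLpos : (0:ℝ) < (L:ℝ) + 1 := by positivity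
      have hε' : 0 < ε / ((L:ℝ)+1) := div_pos hε hLpos
      have hev := (Metric.tendstoUniformlyOn_iff.1 hconv) (ε / ((L:ℝ)+1)) hε'
      rw [eventually_atTop] at hev
      obtain ⟨N, hN⟩ := hev
      refine ⟨N, fun i hi => ?_⟩
      have hiN : ∀ x ∈ Set.Icc (0:ℝ) 1, dist (τ x) (τseq (i+1) x) < ε/((L:ℝ)+1) :=
        hN (i+1) (le_trans hi (Nat.le_succ i))
      have hbound : ∀ᵐ x ∂m, ‖(h (τseq (i+1) x) - h (τ x)) * g i x‖
          ≤ ((L:ℝ) * (ε/((L:ℝ)+1))) * g i x := by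
        filter_upwards [m_ae_mem, hgnn i] with x hx hgx
        have h1 : ‖h (τseq (i+1) x) - h (τ x)‖ ≤ (L:ℝ) * (ε/((L:ℝ)+1)) := by
          have hd : dist (h (τseq (i+1) x)) (h (τ x)) ≤ (L:ℝ) * dist (τseq (i+1) x) (τ x) :=
            hLip.dist_le_mul _ _
          have hd2 : dist (τseq (i+1) x) (τ x) ≤ ε/((L:ℝ)+1) := by
            rw [dist_comm]; exact (hiN x hx).le
          calc ‖h (τseq (i+1) x) - h (τ x)‖ = dist (h (τseq (i+1) x)) (h (τ x)) :=
                (dist_eq_norm _ _).symm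
            _ ≤ (L:ℝ) * dist (τseq (i+1) x) (τ x) := hd
            _ ≤ (L:ℝ) * (ε/((L:ℝ)+1)) := by
                exact mul_le_mul_of_nonneg_left hd2 L.coe_nonneg
        calc ‖(h (τseq (i+1) x) - h (τ x)) * g i x‖
            = ‖h (τseq (i+1) x) - h (τ x)‖ * ‖g i x‖ := norm_mul _ _
          _ ≤ ((L:ℝ) * (ε/((L:ℝ)+1))) * g i x := by
              apply mul_le_mul h1 (le_of_eq ?_) (norm_nonneg _)
                (mul_nonneg L.coe_nonneg hε'.le)
              rw [Real.norm_eq_abs, abs_of_nonneg hgx]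
      have hcb : ‖c i‖ ≤ (L:ℝ) * (ε/((L:ℝ)+1)) := by
        calc ‖c i‖ ≤ ∫ x, ‖(h (τseq (i+1) x) - h (τ x)) * g i x‖ ∂m :=
              norm_integral_le_integral_norm _
          _ ≤ ∫ x, ((L:ℝ) * (ε/((L:ℝ)+1))) * g i x ∂m :=
              integral_mono_ae (intc i).norm ((hgint i).const_mul _) hbound
          _ = (L:ℝ) * (ε/((L:ℝ)+1)) := by rw [integral_const_mul, hgone i, mul_one]
      have hfin : (L:ℝ) * (ε/((L:ℝ)+1)) < ε := by
        have h5 : (L:ℝ) * (ε/((L:ℝ)+1)) < ((L:ℝ)+1) * (ε/((L:ℝ)+1)) :=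
          mul_lt_mul_of_pos_right (by linarith) hε'
        have h6 : ((L:ℝ)+1) * (ε/((L:ℝ)+1)) = ε := by field_simp
        linarith
      rw [Real.dist_eq, sub_zero]
      exact lt_of_le_of_lt hcb hfin
    -- expressing the paired integrals of Cesàro averages
    have hEn : ∀ (w : ℝ → ℝ), (∀ i, Integrable (fun x => w x * g i x) m) →
        ∀ n, ∫ x, w x * fseq n x ∂m
          = (1/(n:ℝ)) * ∑ i ∈ Finset.Icc 1 n, ∫ x, w x * g i x ∂m := by
      intro w hw n
      have hstep : ∫ x, w x * fseq n x ∂m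
          = ∫ x, (1/(n:ℝ)) * ∑ i ∈ Finset.Icc 1 n, w x * g i x ∂m := by
        refine integral_congr_ae (Filter.Eventually.of_forall fun x => ?_)
        show w x * fseq n x = (1/(n:ℝ)) * ∑ i ∈ Finset.Icc 1 n, w x * g i x
        rw [hfseqg n x]
        simp only [Finset.mul_sum]
        exact Finset.sum_congr rfl fun i _ => by ring
      rw [hstep, integral_const_mul, integral_finset_sum _ fun i _ => hw i]
    -- the difference tends to zero
    have hD0 : Tendsto (fun n => (∫ x, h x * fseq n x ∂m) - ∫ x, h (τ x) * fseq n x ∂m)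
        atTop (𝓝 0) := by
      have hDn : ∀ n, (∫ x, h x * fseq n x ∂m) - (∫ x, h (τ x) * fseq n x ∂m)
          = (1/(n:ℝ)) * (∑ i ∈ Finset.range n, c i) + (1/(n:ℝ)) * (b 0 - b n) := by
        intro n
        rw [hEn h inte n, hEn (fun x => h (τ x)) intb n, ← mul_sub, ← mul_add]
        congr 1
        rw [← Finset.sum_sub_distrib, sum_Icc_one (fun i => e i - b i) n]
        have hterm : ∀ i, e (i+1) - b (i+1) = c i + (b i - b (i+1)) := by
          intro i; rw [heb i]; ring
        rw [Finset.sum_congr rfl fun i _ => hterm i, Finset.sum_add_distrib,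
          Finset.sum_range_sub' b n]
      have h1 : Tendsto (fun n : ℕ => (1/(n:ℝ)) * ∑ i ∈ Finset.range n, c i) atTop (𝓝 0) := by
        simpa [one_div] using hc0.cesaro
      have h2 : Tendsto (fun n : ℕ => (1/(n:ℝ)) * (b 0 - b n)) atTop (𝓝 0) := by
        have h2' : Tendsto (fun n : ℕ => 2/(n:ℝ)) atTop (𝓝 0) := by
          simpa using tendsto_const_div_atTop_nhds_zero_nat 2
        apply squeeze_zero_norm ?_ h2'
        · intro n
          have hn0 : (0:ℝ) ≤ 1/(n:ℝ) := by positivity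
          calc ‖(1/(n:ℝ)) * (b 0 - b n)‖ = (1/(n:ℝ)) * |b 0 - b n| := by
                rw [norm_mul, Real.norm_eq_abs, Real.norm_eq_abs, abs_of_nonneg hn0]
            _ ≤ (1/(n:ℝ)) * 2 := by
                apply mul_le_mul_of_nonneg_left ?_ hn0
                have := abs_sub (b 0) (b n)
                calc |b 0 - b n| ≤ |b 0| + |b n| := abs_sub _ _
                  _ ≤ 2 := by linarith [hb1 0, hb1 n]
            _ = 2/(n:ℝ) := by ring
      have hsum2 := h1.add h2
      simp only [add_zero] at hsum2
      apply Tendsto.congr' ?_ hsum2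
      apply Filter.Eventually.of_forall
      intro n
      exact (hDn n).symm
    -- pass to the limit along the subsequence
    have haux : ∀ w : ℝ → ℝ, AEStronglyMeasurable w m → (∀ x, |w x| ≤ 1) →
        Tendsto (fun k => ∫ x, w x * fseq (φ k) x ∂m) atTop (𝓝 (∫ x, w x * fstar x ∂m)) := by
      intro w hw hwbd
      have hwbd' : ∃ C, ∀ x, ‖w x‖ ≤ C := ⟨1, fun x => by simpa [Real.norm_eq_abs] using hwbd x⟩
      rw [← tendsto_sub_nhds_zero_iff]
      apply squeeze_zero_norm ?_ hlim
      intro k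
      have hiw1 : Integrable (fun x => w x * fseq (φ k) x) m := (hfseqint _).bdd_mul hw (Filter.Eventually.of_forall hwbd'.choose_spec)
      have hiw2 : Integrable (fun x => w x * fstar x) m := hfstar.bdd_mul hw (Filter.Eventually.of_forall hwbd'.choose_spec)
      rw [← integral_sub hiw1 hiw2]
      have heq : (fun x => w x * fseq (φ k) x - w x * fstar x)
          = fun x => w x * (fseq (φ k) x - fstar x) := funext fun x => by ring
      rw [heq]
      calc ‖∫ x, w x * (fseq (φ k) x - fstar x) ∂m‖
          ≤ ∫ x, ‖w x * (fseq (φ k) x - fstar x)‖ ∂m := norm_integral_le_integral_norm _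
        _ ≤ ∫ x, |fseq (φ k) x - fstar x| ∂m := by
            apply integral_mono (((hfseqint _).sub hfstar).bdd_mul hw (Filter.Eventually.of_forall hwbd'.choose_spec)).norm
              ((hfseqint _).sub hfstar).abs
            intro x
            calc ‖w x * (fseq (φ k) x - fstar x)‖
                = |w x| * |fseq (φ k) x - fstar x| := by rw [norm_mul]; rfl
              _ ≤ 1 * |fseq (φ k) x - fstar x| :=
                  mul_le_mul_of_nonneg_right (hwbd x) (abs_nonneg _)
              _ = |fseq (φ k) x - fstar x| := one_mul _
    have hE1 : Tendsto (fun k => ∫ x, h x * fseq (φ k) x ∂m) atTop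
        (𝓝 (∫ x, h x * fstar x ∂m)) := haux h hh.aestronglyMeasurable hbd
    have hB1 : Tendsto (fun k => ∫ x, h (τ x) * fseq (φ k) x ∂m) atTop
        (𝓝 (∫ x, h (τ x) * fstar x ∂m)) := haux _ hτaesm (fun x => hbd _)
    have h3 := hE1.sub hB1
    have h4 : Tendsto (fun k => (∫ x, h x * fseq (φ k) x ∂m) - ∫ x, h (τ x) * fseq (φ k) x ∂m)
        atTop (𝓝 0) := hD0.comp hφ.tendsto_atTop
    have h5 := tendsto_nhds_unique h3 h4
    linarith [h5]
  have main : ∀ a b : ℝ, a < b →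
      ((∫ x in Set.Iic a, fstar x ∂m) ≤ ∫ x in τ' ⁻¹' (Set.Iic b), fstar x ∂m) ∧
      ((∫ x in τ' ⁻¹' (Set.Iic a), fstar x ∂m) ≤ ∫ x in Set.Iic b, fstar x ∂m) := by
    intro a b hab
    set h : ℝ → ℝ := fun x => min 1 (max 0 ((b - x)/(b - a))) with hdef
    have hba : (0:ℝ) < b - a := by linarith
    have hlin : LipschitzWith ((b-a)⁻¹.toNNReal) (fun x : ℝ => (b - x)/(b - a)) := by
      apply LipschitzWith.of_dist_le_mul
      intro x y
      rw [Real.dist_eq, Real.dist_eq]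
      have hne : b - a ≠ 0 := ne_of_gt hba
      have heq : (b - x)/(b-a) - (b - y)/(b-a) = -((x - y)/(b-a)) := by
        field_simp
        ring
      rw [heq, abs_neg, abs_div, abs_of_pos hba,
        Real.coe_toNNReal _ (inv_nonneg.2 hba.le), div_eq_inv_mul]
    have hL : LipschitzWith ((b-a)⁻¹.toNNReal) h := (hlin.const_max 0).const_min 1
    have h0 : ∀ x, 0 ≤ h x := fun x => le_min zero_le_one (le_max_left 0 _)
    have h1 : ∀ x, h x ≤ 1 := fun x => min_le_left _ _
    have habs : ∀ x, |h x| ≤ 1 := fun x => abs_le.2 ⟨by linarith [h0 x], h1 x⟩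
    have hone : ∀ x, x ≤ a → h x = 1 := by
      intro x hx
      have hge : (1:ℝ) ≤ (b - x)/(b - a) := by
        rw [le_div_iff₀ hba]; linarith
      show min 1 (max 0 ((b - x)/(b - a))) = 1
      rw [max_eq_right (by linarith : (0:ℝ) ≤ (b-x)/(b-a)), min_eq_left hge]
    have hzero : ∀ x, b ≤ x → h x = 0 := by
      intro x hx
      have hle : (b - x)/(b - a) ≤ 0 :=
        div_nonpos_of_nonpos_of_nonneg (by linarith) hba.le
      show min 1 (max 0 ((b - x)/(b - a))) = 0
      rw [max_eq_left hle, min_eq_right zero_le_one]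
    have hh : Continuous h := hL.continuous
    have hkey := key _ h hL habs
    have hinth : Integrable (fun x => h x * fstar x) m :=
      hfstar.bdd_mul hh.aestronglyMeasurable (c := 1) (Filter.Eventually.of_forall fun x => by simpa [Real.norm_eq_abs] using habs x)
    have hτaesm2 : AEStronglyMeasurable (fun x => h (τ x)) m :=
      (hh.measurable.comp_aemeasurable hτmeas).aestronglyMeasurable
    have hinthτ : Integrable (fun x => h (τ x) * fstar x) m :=
      hfstar.bdd_mul hτaesm2 (c := 1) (Filter.Eventually.of_forall fun x => by simpa [Real.norm_eq_abs] using habs _)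
    constructor
    · have hw1 : ∫ x in Set.Iic a, fstar x ∂m ≤ ∫ x, h x * fstar x ∂m := by
        rw [← integral_indicator measurableSet_Iic]
        apply integral_mono_ae (hfstar.indicator measurableSet_Iic) hinth
        filter_upwards [hstar0] with x hx
        by_cases hxa : x ∈ Set.Iic a
        · rw [Set.indicator_of_mem hxa, hone x hxa, one_mul]
        · rw [Set.indicator_of_notMem hxa]
          exact mul_nonneg (h0 x) hx
      have hw2 : ∫ x, h (τ x) * fstar x ∂m ≤ ∫ x in τ' ⁻¹' (Set.Iic b), fstar x ∂m := by
        rw [← integral_indicator (hτ'meas measurableSet_Iic)]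
        apply integral_mono_ae hinthτ (hfstar.indicator (hτ'meas measurableSet_Iic))
        filter_upwards [hstar0, hττ'] with x hx hx'
        by_cases hxb : τ' x ≤ b
        · rw [Set.indicator_of_mem (show x ∈ τ' ⁻¹' (Set.Iic b) from hxb)]
          calc h (τ x) * fstar x ≤ 1 * fstar x :=
              mul_le_mul_of_nonneg_right (h1 _) hx
            _ = fstar x := one_mul _
        · rw [Set.indicator_of_notMem (show x ∉ τ' ⁻¹' (Set.Iic b) from hxb)]
          have hzx : h (τ x) = 0 := by rw [hx']; exact hzero _ (le_of_not_ge hxb)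
          rw [hzx, zero_mul]
      calc ∫ x in Set.Iic a, fstar x ∂m ≤ ∫ x, h x * fstar x ∂m := hw1
        _ = ∫ x, h (τ x) * fstar x ∂m := hkey.symm
        _ ≤ ∫ x in τ' ⁻¹' (Set.Iic b), fstar x ∂m := hw2
    · have hw1 : ∫ x in τ' ⁻¹' (Set.Iic a), fstar x ∂m ≤ ∫ x, h (τ x) * fstar x ∂m := by
        rw [← integral_indicator (hτ'meas measurableSet_Iic)]
        apply integral_mono_ae (hfstar.indicator (hτ'meas measurableSet_Iic)) hinthτ
        filter_upwards [hstar0, hττ'] with x hx hx'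
        by_cases hxa : τ' x ≤ a
        · rw [Set.indicator_of_mem (show x ∈ τ' ⁻¹' (Set.Iic a) from hxa)]
          have hzx : h (τ x) = 1 := by rw [hx']; exact hone _ hxa
          rw [hzx, one_mul]
        · rw [Set.indicator_of_notMem (show x ∉ τ' ⁻¹' (Set.Iic a) from hxa)]
          exact mul_nonneg (h0 _) hx
      have hw2 : ∫ x, h x * fstar x ∂m ≤ ∫ x in Set.Iic b, fstar x ∂m := by
        rw [← integral_indicator measurableSet_Iic]
        apply integral_mono_ae hinth (hfstar.indicator measurableSet_Iic)
        filter_upwards [hstar0] with x hx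
        by_cases hxb : x ∈ Set.Iic b
        · rw [Set.indicator_of_mem hxb]
          calc h x * fstar x ≤ 1 * fstar x := mul_le_mul_of_nonneg_right (h1 _) hx
            _ = fstar x := one_mul _
        · rw [Set.indicator_of_notMem hxb]
          have hzx : h x = 0 := hzero x (le_of_not_ge (by simpa [Set.mem_Iic] using hxb))
          rw [hzx, zero_mul]
      calc ∫ x in τ' ⁻¹' (Set.Iic a), fstar x ∂m ≤ ∫ x, h (τ x) * fstar x ∂m := hw1
        _ = ∫ x, h x * fstar x ∂m := hkey
        _ ≤ ∫ x in Set.Iic b, fstar x ∂m := hw2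
  set μs := m.withDensity (fun x => ENNReal.ofReal (fstar x)) with hμs
  have hμsS : ∀ S : Set ℝ, MeasurableSet S →
      μs S = ENNReal.ofReal (∫ x in S, fstar x ∂m) :=
    fun S hS => withDensity_apply_eq hfstar hstar0 hS
  haveI hfinμs : IsFiniteMeasure μs :=
    ⟨by rw [hμsS _ MeasurableSet.univ]; exact ENNReal.ofReal_lt_top⟩
  set ν := Measure.map τ' μs with hν
  haveI hfinν : IsFiniteMeasure ν := by
    constructor
    rw [hν, Measure.map_apply hτ'meas MeasurableSet.univ, Set.preimage_univ]
    exact measure_lt_top μs _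
  have hεk : ∀ k : ℕ, (0:ℝ) < 1/((k:ℝ)+1) := by intro k; positivity
  have hanti : ∀ k l : ℕ, k ≤ l → (1:ℝ)/((l:ℝ)+1) ≤ 1/((k:ℝ)+1) := by
    intro k l hkl
    apply one_div_le_one_div_of_le (by positivity)
    exact_mod_cast add_le_add_left (Nat.cast_le.2 hkl) 1
  have hi1 : ∀ t : ℝ, μs (Set.Iic t) ≤ ν (Set.Iic t) := by
    intro t
    have hseq : Tendsto (fun k : ℕ => μs (τ' ⁻¹' Set.Iic (t + 1/((k:ℝ)+1)))) atTop
        (𝓝 (μs (⋂ k : ℕ, τ' ⁻¹' Set.Iic (t + 1/((k:ℝ)+1))))) := by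
      apply tendsto_measure_iInter_atTop
        (fun k => (hτ'meas measurableSet_Iic).nullMeasurableSet) ?_ ⟨0, measure_ne_top _ _⟩
      intro k l hkl
      apply Set.preimage_mono
      apply Set.Iic_subset_Iic.2
      linarith [hanti k l hkl]
    have hIic : (⋂ k : ℕ, Set.Iic (t + 1/((k:ℝ)+1))) = Set.Iic t := by
      ext y
      simp only [Set.mem_iInter, Set.mem_Iic]
      constructor
      · intro hy
        by_contra hyt
        push_neg at hyt
        obtain ⟨k, hk⟩ := exists_nat_one_div_lt (by linarith : (0:ℝ) < y - t)
        have := hy k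
        linarith
      · intro hy k
        linarith [hεk k]
    have hInter : (⋂ k : ℕ, τ' ⁻¹' Set.Iic (t + 1/((k:ℝ)+1))) = τ' ⁻¹' Set.Iic t := by
      rw [← Set.preimage_iInter, hIic]
    rw [hInter] at hseq
    have hle : ∀ k : ℕ, μs (Set.Iic t) ≤ μs (τ' ⁻¹' Set.Iic (t + 1/((k:ℝ)+1))) := by
      intro k
      rw [hμsS _ measurableSet_Iic, hμsS _ (hτ'meas measurableSet_Iic)]
      exact ENNReal.ofReal_le_ofReal
        ((main t (t + 1/((k:ℝ)+1)) (by linarith [hεk k])).1)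
    have hfinal := ge_of_tendsto hseq (Filter.Eventually.of_forall hle)
    rw [hν, Measure.map_apply hτ'meas measurableSet_Iic]
    exact hfinal
  have hi2 : ∀ t : ℝ, ν (Set.Iio t) ≤ μs (Set.Iic t) := by
    intro t
    have hseq : Tendsto (fun k : ℕ => μs (τ' ⁻¹' Set.Iic (t - 1/((k:ℝ)+1)))) atTop
        (𝓝 (μs (⋃ k : ℕ, τ' ⁻¹' Set.Iic (t - 1/((k:ℝ)+1))))) := by
      apply tendsto_measure_iUnion_atTop
      intro k l hkl
      apply Set.preimage_mono
      apply Set.Iic_subset_Iic.2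
      linarith [hanti k l hkl]
    have hIio : (⋃ k : ℕ, Set.Iic (t - 1/((k:ℝ)+1))) = Set.Iio t := by
      ext y
      simp only [Set.mem_iUnion, Set.mem_Iic, Set.mem_Iio]
      constructor
      · rintro ⟨k, hk⟩
        have := hεk k
        linarith
      · intro hy
        obtain ⟨k, hk⟩ := exists_nat_one_div_lt (by linarith : (0:ℝ) < t - y)
        exact ⟨k, by linarith⟩
    have hUnion : (⋃ k : ℕ, τ' ⁻¹' Set.Iic (t - 1/((k:ℝ)+1))) = τ' ⁻¹' Set.Iio t := by
      rw [← Set.preimage_iUnion, hIio]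
    rw [hUnion] at hseq
    have hle : ∀ k : ℕ, μs (τ' ⁻¹' Set.Iic (t - 1/((k:ℝ)+1))) ≤ μs (Set.Iic t) := by
      intro k
      rw [hμsS _ measurableSet_Iic, hμsS _ (hτ'meas measurableSet_Iic)]
      exact ENNReal.ofReal_le_ofReal
        ((main (t - 1/((k:ℝ)+1)) t (by linarith [hεk k])).2)
    have hfinal := le_of_tendsto hseq (Filter.Eventually.of_forall hle)
    rw [hν, Measure.map_apply hτ'meas measurableSet_Iio]
    exact hfinal
  have hi3 : ∀ t : ℝ, ν (Set.Iic t) ≤ μs (Set.Iic t) := by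
    intro t
    have hA : Tendsto (fun k : ℕ => ν (Set.Iio (t + 1/((k:ℝ)+1)))) atTop
        (𝓝 (ν (Set.Iic t))) := by
      have h6 : Tendsto (fun k : ℕ => ν (Set.Iio (t + 1/((k:ℝ)+1)))) atTop
          (𝓝 (ν (⋂ k : ℕ, Set.Iio (t + 1/((k:ℝ)+1))))) := by
        apply tendsto_measure_iInter_atTop
          (fun k : ℕ => measurableSet_Iio.nullMeasurableSet)
          (fun k l hkl => Set.Iio_subset_Iio (by linarith [hanti k l hkl]))
          ⟨0, measure_ne_top _ _⟩
      have h7 : (⋂ k : ℕ, Set.Iio (t + 1/((k:ℝ)+1))) = Set.Iic t := by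
        ext y
        simp only [Set.mem_iInter, Set.mem_Iio, Set.mem_Iic]
        constructor
        · intro hy
          by_contra hyt
          push_neg at hyt
          obtain ⟨k, hk⟩ := exists_nat_one_div_lt (by linarith : (0:ℝ) < y - t)
          have := hy k
          linarith
        · intro hy k
          have := hεk k
          linarith
      rw [h7] at h6
      exact h6
    have hB : Tendsto (fun k : ℕ => μs (Set.Iic (t + 1/((k:ℝ)+1)))) atTop
        (𝓝 (μs (Set.Iic t))) := by
      have h6 : Tendsto (fun k : ℕ => μs (Set.Iic (t + 1/((k:ℝ)+1)))) atTop
          (𝓝 (μs (⋂ k : ℕ, Set.Iic (t + 1/((k:ℝ)+1))))) := by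
        apply tendsto_measure_iInter_atTop
          (fun k : ℕ => measurableSet_Iic.nullMeasurableSet)
          (fun k l hkl => Set.Iic_subset_Iic.2 (by linarith [hanti k l hkl]))
          ⟨0, measure_ne_top _ _⟩
      have h7 : (⋂ k : ℕ, Set.Iic (t + 1/((k:ℝ)+1))) = Set.Iic t := by
        ext y
        simp only [Set.mem_iInter, Set.mem_Iic]
        constructor
        · intro hy
          by_contra hyt
          push_neg at hyt
          obtain ⟨k, hk⟩ := exists_nat_one_div_lt (by linarith : (0:ℝ) < y - t)
          have := hy k
          linarith
        · intro hy k
          have := hεk k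
          linarith
      rw [h7] at h6
      exact h6
    exact le_of_tendsto_of_tendsto hA hB
      (Filter.Eventually.of_forall fun k => hi2 (t + 1/((k:ℝ)+1)))
  have hνμ : ν = μs := Measure.ext_of_Iic ν μs fun t => le_antisymm (hi3 t) (hi1 t)
  have hsetae : τ ⁻¹' E =ᵐ[μs] τ' ⁻¹' E := by
    have h8 : τ ⁻¹' E =ᵐ[m] τ' ⁻¹' E := by
      filter_upwards [hττ'] with x hx
      show (τ x ∈ E) = (τ' x ∈ E)
      rw [hx]
    exact Filter.EventuallyEq.filter_mono h8
      (Measure.AbsolutelyContinuous.ae_le (withDensity_absolutelyContinuous m _))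
  calc μs (τ ⁻¹' E) = μs (τ' ⁻¹' E) := measure_congr hsetae
    _ = ν E := (Measure.map_apply hτ'meas hE).symm
    _ = μs E := by rw [hνμ]
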